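/- Let Q be a monotone Boolean query and let the finite instance D, partitioned into D^en and D^ex, be Q-separable with partition {D_1, …, D_s}, each subset of D carrying the inherited partition. Then for every k and every τ ∈ D_k ∩ D^en: CE(D,Q,τ) = CE(D_k,Q,τ) · (1 − P_{D∖D_k}(Q)). -/

import Mathlib

open Finset

attribute [local instance] Classical.propDecidable

noncomputable section

variable {α : Type*} [DecidableEq α]

/-- The causal-effect score (= Banzhaf power index):
`CE(D,Q,τ) = 2^{-(|Dᵉⁿ|-1)} · Σ_{S ⊆ Dᵉⁿ∖{τ}} (Q[S ∪ Dᵉˣ ∪ {τ}] − Q[S ∪ Dᵉˣ])`. -/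
def ceScore (Q : Finset α → ℕ) (Den Dex : Finset α) (τ : α) : ℝ :=
  (∑ S ∈ (Den.erase τ).powerset,
      ((Q (S ∪ Dex ∪ {τ}) : ℝ) - (Q (S ∪ Dex) : ℝ))) / 2 ^ (Den.card - 1)

/-- The Shapley value of an endogenous tuple. -/
def shapleyScore (Q : Finset α → ℕ) (Den Dex : Finset α) (τ : α) : ℝ :=
  ∑ S ∈ (Den.erase τ).powerset,
    (((S.card.factorial : ℝ) * ((Den.card - S.card - 1).factorial : ℝ)) /
        (Den.card.factorial : ℝ)) *
      ((Q (S ∪ Dex ∪ {τ}) : ℝ) - (Q (S ∪ Dex) : ℝ))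

/-- Responsibility: `1/(1+m)` where `m` is the minimum cardinality of a contingency set
for `τ`, and `0` if `τ` has no contingency set. -/
def respScore (Q : Finset α → ℕ) (D Den : Finset α) (τ : α) : ℝ :=
  if ∃ Γ ⊆ Den.erase τ, Q (D \ Γ) = 1 ∧ Q (D \ insert τ Γ) = 0 then
    1 / (1 + ((sInf {n : ℕ | ∃ Γ ⊆ Den.erase τ,
        Γ.card = n ∧ Q (D \ Γ) = 1 ∧ Q (D \ insert τ Γ) = 0} : ℕ) : ℝ))
  else 0

/-- Probability of the Boolean query `Q` under the uniform-1/2 tuple-independent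
distribution on an instance with endogenous part `Een` and exogenous part `Eex`. -/
def probQ (Q : Finset α → ℕ) (Een Eex : Finset α) : ℝ :=
  ((Een.powerset.filter (fun S => Q (S ∪ Eex) = 1)).card : ℝ) / 2 ^ Een.card

/-- Two scores are aligned on the endogenous tuples. -/
def scoresAligned (sc1 sc2 : α → ℝ) (Den : Finset α) : Prop :=
  ∀ τ ∈ Den, ∀ τ' ∈ Den, (sc1 τ ≤ sc1 τ' ↔ sc2 τ ≤ sc2 τ')

/-- `W` is a minimal satisfying set for `Q`. -/
def isMSS (Q : Finset α → ℕ) (W : Finset α) : Prop :=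
  Q W = 1 ∧ ∀ τ ∈ W, Q (W.erase τ) = 0

/-- `D` is `Q`-separable with partition `D_1, …, D_s`. -/
def QSeparable (Q : Finset α → ℕ) (D : Finset α) {s : ℕ} (Dp : Fin s → Finset α) : Prop :=
  (∀ i, (Dp i).Nonempty) ∧ (∀ i j, i ≠ j → Disjoint (Dp i) (Dp j)) ∧
  (Finset.univ.biUnion Dp = D) ∧
  (∀ W : Finset α, (W ⊆ D ∧ isMSS Q W) ↔ ∃ i, W ⊆ Dp i ∧ isMSS Q W)


lemma exists_mss (Q : Finset α → ℕ) (hQ01 : ∀ W, Q W ≤ 1) :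
    ∀ W : Finset α, Q W = 1 → ∃ W' ⊆ W, isMSS Q W' := by
  intro W
  induction W using Finset.strongInduction with
  | _ W ih =>
    intro hW
    by_cases h : ∀ τ ∈ W, Q (W.erase τ) = 0
    · exact ⟨W, Finset.Subset.refl W, hW, h⟩
    · push_neg at h
      obtain ⟨τ, hτ, hne⟩ := h
      have h1 : Q (W.erase τ) = 1 := by have := hQ01 (W.erase τ); omega
      obtain ⟨W', hW', hmss⟩ := ih (W.erase τ) (Finset.erase_ssubset hτ) h1
      exact ⟨W', hW'.trans (Finset.erase_subset _ _), hmss⟩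

lemma boolcalc (q1 q0 a' a b : ℕ) (B1 : q1 ≤ 1) (B0 : q0 ≤ 1) (Ba' : a' ≤ 1)
    (Ba : a ≤ 1) (Bb : b ≤ 1) (i1 : q1 = 1 ↔ (a' = 1 ∨ b = 1))
    (i0 : q0 = 1 ↔ (a = 1 ∨ b = 1)) :
    (q1 : ℝ) - (q0 : ℝ) = ((a' : ℝ) - (a : ℝ)) * (1 - (b : ℝ)) := by
  rcases Nat.le_one_iff_eq_zero_or_eq_one.mp Ba' with h|h <;>
    rcases Nat.le_one_iff_eq_zero_or_eq_one.mp Ba with h'|h' <;>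
    rcases Nat.le_one_iff_eq_zero_or_eq_one.mp Bb with h''|h'' <;>
    rcases Nat.le_one_iff_eq_zero_or_eq_one.mp B1 with g1|g1 <;>
    rcases Nat.le_one_iff_eq_zero_or_eq_one.mp B0 with g0|g0 <;>
    simp_all <;> norm_num

lemma sum_powerset_union_mul (u v : Finset α) (hd : Disjoint u v) (F G : Finset α → ℝ) :
    ∑ S ∈ (u ∪ v).powerset, F (S ∩ u) * G (S ∩ v) =
      (∑ S₁ ∈ u.powerset, F S₁) * (∑ S₂ ∈ v.powerset, G S₂) := by
  rw [Finset.sum_mul_sum, ← Finset.sum_product']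
  refine Finset.sum_nbij' (fun S => (S ∩ u, S ∩ v)) (fun p => p.1 ∪ p.2) ?_ ?_ ?_ ?_ ?_
  · intro S hS
    simp only [Finset.mem_product, Finset.mem_powerset]
    exact ⟨Finset.inter_subset_right, Finset.inter_subset_right⟩
  · intro p hp
    simp only [Finset.mem_product, Finset.mem_powerset] at hp ⊢
    exact Finset.union_subset_union hp.1 hp.2
  · intro S hS
    simp only [Finset.mem_powerset] at hS
    show S ∩ u ∪ S ∩ v = S
    rw [← Finset.inter_union_distrib_left, Finset.inter_eq_left.mpr hS]
  · intro p hp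
    simp only [Finset.mem_product, Finset.mem_powerset] at hp
    have hd' : ∀ x, x ∈ u → x ∈ v → False := fun x hx hy =>
      Finset.disjoint_left.mp hd hx hy
    have h1 : (p.1 ∪ p.2) ∩ u = p.1 := by
      ext x
      simp only [Finset.mem_inter, Finset.mem_union]
      constructor
      · rintro ⟨h | h, hu⟩
        · exact h
        · exact absurd (hd' x hu (hp.2 h)) (fun h => h)
      · exact fun h => ⟨Or.inl h, hp.1 h⟩
    have h2 : (p.1 ∪ p.2) ∩ v = p.2 := by
      ext x
      simp only [Finset.mem_inter, Finset.mem_union]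
      constructor
      · rintro ⟨h | h, hv⟩
        · exact absurd (hd' x (hp.1 h) hv) (fun h => h)
        · exact h
      · exact fun h => ⟨Or.inr h, hp.2 h⟩
    show ((p.1 ∪ p.2) ∩ u, (p.1 ∪ p.2) ∩ v) = p
    rw [h1, h2]
  · intro S hS; rfl

/-- For a monotone `Q`, a `Q`-separable instance `D` with partition `D_1,…,D_s`
(inherited endogenous/exogenous partitions), every `k` and every `τ ∈ D_k ∩ Dᵉⁿ`:
`CE(D,Q,τ) = CE(D_k,Q,τ) · (1 − P_{D∖D_k}(Q))`. -/
theorem stmt3 (Q : Finset α → ℕ) (hQ01 : ∀ W, Q W ≤ 1)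
    (hmono : ∀ ⦃W W' : Finset α⦄, W ⊆ W' → Q W ≤ Q W')
    (D Den Dex : Finset α) (hpart : Den ∪ Dex = D) (hdisj : Disjoint Den Dex)
    {s : ℕ} (Dp : Fin s → Finset α)
    (hsep : QSeparable Q D Dp) :
    ∀ (k : Fin s) (τ : α), τ ∈ Dp k → τ ∈ Den →
      ceScore Q Den Dex τ =
        ceScore Q (Dp k ∩ Den) (Dp k ∩ Dex) τ *
          (1 - probQ Q ((D \ Dp k) ∩ Den) ((D \ Dp k) ∩ Dex)) := by
  obtain ⟨hne, hdisjp, hunionD, hmss⟩ := hsep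
  intro k τ hτk hτen
  have hDenD : Den ⊆ D := hpart ▸ Finset.subset_union_left
  have hDexD : Dex ⊆ D := hpart ▸ Finset.subset_union_right
  set K := Dp k with hK
  -- key separation fact
  have key : ∀ W, W ⊆ D → (Q W = 1 ↔ Q (W ∩ K) = 1 ∨ Q (W \ K) = 1) := by
    intro W hWD
    constructor
    · intro hW
      obtain ⟨W', hW'W, hmssW'⟩ := exists_mss Q hQ01 W hW
      obtain ⟨i, hWi, _⟩ := (hmss W').mp ⟨hW'W.trans hWD, hmssW'⟩
      by_cases hik : i = k
      · left
        have hWk : W' ⊆ K := by rw [hK, ← hik]; exact hWi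
        have hsub : W' ⊆ W ∩ K := Finset.subset_inter hW'W hWk
        have h1 := hmono hsub
        have h2 := hQ01 (W ∩ K)
        have h3 := hmssW'.1
        omega
      · right
        have hsub : W' ⊆ W \ K := by
          intro x hx
          exact Finset.mem_sdiff.mpr ⟨hW'W hx, fun hxK =>
            Finset.disjoint_left.mp (hdisjp i k hik) (hWi hx) hxK⟩
        have h1 := hmono hsub
        have h2 := hQ01 (W \ K)
        have h3 := hmssW'.1
        omega
    · rintro (h | h)
      · have h1 := hmono (Finset.inter_subset_left : W ∩ K ⊆ W)
        have h2 := hQ01 W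
        omega
      · have h1 := hmono (Finset.sdiff_subset : W \ K ⊆ W)
        have h2 := hQ01 W
        omega
  set A : Finset α := K ∩ Den with hA
  set Ex1 : Finset α := K ∩ Dex with hEx1
  set v : Finset α := (D \ K) ∩ Den with hv
  set Ex2 : Finset α := (D \ K) ∩ Dex with hEx2
  set u : Finset α := A.erase τ with hu
  have hsplit : Den.erase τ = u ∪ v := by
    ext x
    simp only [hu, hA, hv, Finset.mem_union, Finset.mem_erase, Finset.mem_inter,
      Finset.mem_sdiff]
    have h1 : x ∈ Den → x ∈ D := fun h => hDenD h
    by_cases hxK : x ∈ K <;> by_cases hxτ : x = τ <;> subst_eqs <;> tauto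
  have hduv : Disjoint u v := by
    rw [Finset.disjoint_left]
    intro x hx hxv
    rw [hu, hA] at hx
    rw [hv] at hxv
    exact (Finset.mem_sdiff.mp (Finset.mem_inter.mp hxv).1).2
      (Finset.mem_inter.mp (Finset.mem_erase.mp hx).2).1
  -- pointwise factorization
  have hpoint : ∀ S ∈ (u ∪ v).powerset,
      ((Q (S ∪ Dex ∪ {τ}) : ℝ) - (Q (S ∪ Dex) : ℝ)) =
        ((Q ((S ∩ u) ∪ Ex1 ∪ {τ}) : ℝ) - (Q ((S ∩ u) ∪ Ex1) : ℝ)) *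
          (1 - (Q ((S ∩ v) ∪ Ex2) : ℝ)) := by
    intro S hS
    rw [Finset.mem_powerset, ← hsplit] at hS
    have hxS : ∀ x ∈ S, x ∈ Den ∧ x ≠ τ := fun x hx => by
      have := hS hx; rw [Finset.mem_erase] at this; exact ⟨this.2, this.1⟩
    have e1 : (S ∪ Dex ∪ {τ}) ∩ K = (S ∩ u) ∪ Ex1 ∪ {τ} := by
      ext x
      simp only [hu, hA, hEx1, Finset.mem_union, Finset.mem_inter, Finset.mem_erase,
        Finset.mem_singleton]
      have h1 : x ∈ S → x ∈ Den ∧ x ≠ τ := fun h => hxS x h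
      by_cases hxτ : x = τ <;> subst_eqs <;> tauto
    have e0 : (S ∪ Dex) ∩ K = (S ∩ u) ∪ Ex1 := by
      ext x
      simp only [hu, hA, hEx1, Finset.mem_union, Finset.mem_inter, Finset.mem_erase]
      have h1 : x ∈ S → x ∈ Den ∧ x ≠ τ := fun h => hxS x h
      tauto
    have e2 : (S ∪ Dex ∪ {τ}) \ K = (S ∩ v) ∪ Ex2 := by
      ext x
      simp only [hv, hEx2, Finset.mem_union, Finset.mem_inter, Finset.mem_sdiff,
        Finset.mem_singleton]
      have h1 : x ∈ S → x ∈ Den ∧ x ≠ τ := fun h => hxS x h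
      have h2 : x ∈ Den → x ∈ D := fun h => hDenD h
      have h3 : x ∈ Dex → x ∈ D := fun h => hDexD h
      by_cases hxτ : x = τ <;> subst_eqs <;> tauto
    have e2' : (S ∪ Dex) \ K = (S ∩ v) ∪ Ex2 := by
      ext x
      simp only [hv, hEx2, Finset.mem_union, Finset.mem_inter, Finset.mem_sdiff]
      have h1 : x ∈ S → x ∈ Den ∧ x ≠ τ := fun h => hxS x h
      have h2 : x ∈ Den → x ∈ D := fun h => hDenD h
      have h3 : x ∈ Dex → x ∈ D := fun h => hDexD h
      tauto
    have hW1D : S ∪ Dex ∪ {τ} ⊆ D := by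
      intro x hx
      rcases Finset.mem_union.mp hx with hx | hx
      · rcases Finset.mem_union.mp hx with hx | hx
        · exact hDenD (hxS x hx).1
        · exact hDexD hx
      · rw [Finset.mem_singleton] at hx; exact hx ▸ hDenD hτen
    have hW0D : S ∪ Dex ⊆ D := by
      intro x hx
      rcases Finset.mem_union.mp hx with hx | hx
      · exact hDenD (hxS x hx).1
      · exact hDexD hx
    have i1 := key _ hW1D
    have i0 := key _ hW0D
    rw [e1, e2] at i1
    rw [e0, e2'] at i0
    have B1 := hQ01 (S ∪ Dex ∪ {τ})
    have B0 := hQ01 (S ∪ Dex)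
    have Ba' := hQ01 ((S ∩ u) ∪ Ex1 ∪ {τ})
    have Ba := hQ01 ((S ∩ u) ∪ Ex1)
    have Bb := hQ01 ((S ∩ v) ∪ Ex2)
    exact boolcalc _ _ _ _ _ B1 B0 Ba' Ba Bb i1 i0
  -- sums
  have hcard1 : 1 ≤ A.card := Finset.card_pos.mpr ⟨τ, Finset.mem_inter.mpr ⟨hτk, hτen⟩⟩
  have hcardsum : Den.card = A.card + v.card := by
    have h1 : A = Den ∩ K := by rw [hA, Finset.inter_comm]
    have h2 : v = Den \ K := by
      ext x
      simp only [hv, Finset.mem_inter, Finset.mem_sdiff]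
      have := fun h => hDenD (x := x) h
      tauto
    rw [h1, h2, Finset.card_inter_add_card_sdiff]
  have hsum2 : ∑ S ∈ v.powerset, (1 - (Q (S ∪ Ex2) : ℝ)) =
      2 ^ v.card - ((v.powerset.filter (fun S => Q (S ∪ Ex2) = 1)).card : ℝ) := by
    rw [Finset.sum_sub_distrib, Finset.sum_const, Finset.card_powerset, nsmul_eq_mul,
      mul_one]
    congr 1
    · push_cast; ring
    rw [Finset.card_filter]
    push_cast
    apply Finset.sum_congr rfl
    intro S _
    have := hQ01 (S ∪ Ex2)
    by_cases h : Q (S ∪ Ex2) = 1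
    · simp [h]
    · have h0 : Q (S ∪ Ex2) = 0 := by omega
      simp [h, h0]
  unfold ceScore probQ
  have hprod := sum_powerset_union_mul u v hduv
    (fun T => ((Q (T ∪ Ex1 ∪ {τ}) : ℝ) - (Q (T ∪ Ex1) : ℝ)))
    (fun T => (1 - (Q (T ∪ Ex2) : ℝ)))
  rw [hsplit, Finset.sum_congr rfl hpoint, hprod, hsum2]
  have hA' : (K ∩ Den).erase τ = u := rfl
  rw [hA']
  have hcard2 : Den.card - 1 = (A.card - 1) + v.card := by omega
  have hcardA : (K ∩ Den).card = A.card := rfl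
  rw [hcardA, hcard2, pow_add]
  have h2a : (0:ℝ) < 2 ^ (A.card - 1) := by positivity
  have h2m : (0:ℝ) < 2 ^ v.card := by positivity
  field_simp
  try ring

end
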